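/- Let (C, R) be a chemical reaction network on N species and let x : [0,∞) → ℝ^N_{>0} be a trajectory of the associated non-autonomous mass-action system with bounded kinetics. Suppose that for every x̄ ∈ ℝ^N_{>0} there exists T = T_{x̄} > 0 such that (d/dt) V_{x̄}(x(t)) < 0 for all t > T. Then the ω-limit set of the trajectory x(·) is a single point. -/

import Mathlib

open Filter

/-- A chemical reaction network on `N` species: a finite set `C ⊆ ℤ^N_{≥0}` of complexes
and a finite set `R` of reactions `y → y'` with `y ≠ y'`, both endpoints complexes,
such that every complex takes part in at least one reaction. -/
def IsNetwork {N : ℕ} (C : Finset (Fin N → ℕ)) (R : Finset ((Fin N → ℕ) × (Fin N → ℕ))) : Prop :=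
  (∀ r ∈ R, r.1 ∈ C ∧ r.2 ∈ C ∧ r.1 ≠ r.2) ∧ (∀ y ∈ C, ∃ r ∈ R, r.1 = y ∨ r.2 = y)

/-- Directed edge of the reaction diagram. -/
def dirStep {N : ℕ} (R : Finset ((Fin N → ℕ) × (Fin N → ℕ))) (a b : Fin N → ℕ) : Prop :=
  (a, b) ∈ R

/-- Undirected edge of the reaction diagram. -/
def symStep {N : ℕ} (R : Finset ((Fin N → ℕ) × (Fin N → ℕ))) (a b : Fin N → ℕ) : Prop :=
  (a, b) ∈ R ∨ (b, a) ∈ R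

/-- A network is weakly reversible when each linkage class (connected component of the
reaction diagram, ignoring directions) is strongly connected as a directed graph:
whenever `b` is reachable from `a` ignoring directions, it is reachable along
directed reactions. -/
def WeaklyReversible {N : ℕ} (R : Finset ((Fin N → ℕ) × (Fin N → ℕ))) : Prop :=
  ∀ a b, Relation.ReflTransGen (symStep R) a b → Relation.ReflTransGen (dirStep R) a b

/-- The mass-action monomial `x^y = ∏ i, (x i)^(y i)` (with the convention `0^0 = 1`). -/
noncomputable def monom {N : ℕ} (x : Fin N → ℝ) (y : Fin N → ℕ) : ℝ := ∏ i, x i ^ y i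

/-- A complex, viewed as a real vector. -/
def cv {N : ℕ} (y : Fin N → ℕ) : Fin N → ℝ := fun i => (y i : ℝ)

/-- The standard Lyapunov function of chemical reaction network theory,
`V_{x̄}(x) = ∑ i, (x i (ln (x i) − ln (x̄ i) − 1) + x̄ i)`, extended to the boundary by
the convention `0 · ln 0 = 0` (note `Real.log 0 = 0`). -/
noncomputable def lyap {N : ℕ} (xb x : Fin N → ℝ) : ℝ :=
  ∑ i, (x i * (Real.log (x i) - Real.log (xb i) - 1) + xb i)

/-- The ω-limit set of the trajectory `x`. -/
def omegaSet {N : ℕ} (x : ℝ → Fin N → ℝ) : Set (Fin N → ℝ) :=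
  {z | ∃ tn : ℕ → ℝ, Tendsto tn atTop atTop ∧ Tendsto (fun n => x (tn n)) atTop (nhds z)}


lemma term_nonneg {a b : ℝ} (ha : 0 < a) (hb : 0 < b) :
    0 ≤ a * (Real.log a - Real.log b - 1) + b := by
  have h := Real.log_le_sub_one_of_pos (show 0 < b / a by positivity)
  rw [Real.log_div hb.ne' ha.ne'] at h
  have h2 := mul_le_mul_of_nonneg_left h ha.le
  have h3 : a * (b / a) = b := by field_simp
  nlinarith

lemma lyap_nonneg {N : ℕ} {xb u : Fin N → ℝ} (hxb : ∀ i, 0 < xb i) (hu : ∀ i, 0 < u i) :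
    0 ≤ lyap xb u :=
  Finset.sum_nonneg fun i _ => term_nonneg (hu i) (hxb i)

lemma lyap_continuous {N : ℕ} (xb : Fin N → ℝ) : Continuous (lyap xb) := by
  unfold lyap
  refine continuous_finset_sum _ fun i _ => ?_
  have h1 : Continuous fun u : Fin N → ℝ => u i * Real.log (u i) :=
    Real.continuous_mul_log.comp (continuous_apply i)
  have he : (fun u : Fin N → ℝ =>
      u i * (Real.log (u i) - Real.log (xb i) - 1) + xb i)
      = fun u => u i * Real.log (u i) - u i * (Real.log (xb i) + 1) + xb i := by
    funext u; ring
  rw [he]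
  exact ((h1.sub ((continuous_apply i).mul continuous_const)).add continuous_const)

lemma lyap_antitone {N : ℕ} {x : ℝ → Fin N → ℝ} {xb : Fin N → ℝ}
    {T : ℝ} (hd : ∀ t > T, deriv (fun s => lyap xb (x s)) t < 0) :
    AntitoneOn (fun s => lyap xb (x s)) (Set.Ioi T) := by
  have hdiff : ∀ t ∈ Set.Ioi T, DifferentiableAt ℝ (fun s => lyap xb (x s)) t := by
    intro t ht
    by_contra h
    exact (hd t ht).ne (deriv_zero_of_not_differentiableAt h)
  exact (strictAntiOn_of_deriv_neg (convex_Ioi T)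
    (fun t ht => (hdiff t ht).continuousAt.continuousWithinAt)
    (fun t ht => hd t (by simpa [interior_Ioi] using ht))).antitoneOn

lemma lyap_limit {N : ℕ} {x : ℝ → Fin N → ℝ} {xb : Fin N → ℝ}
    (hpos : ∀ t : ℝ, 0 ≤ t → ∀ i, 0 < x t i) (hxb : ∀ i, 0 < xb i)
    {T : ℝ} (hT : 0 < T)
    (hant : AntitoneOn (fun s => lyap xb (x s)) (Set.Ioi T)) :
    ∃ ℓ : ℝ, Tendsto (fun t => lyap xb (x t)) atTop (nhds ℓ) := by
  set f := fun s => lyap xb (x s) with hf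
  set g := fun t => f (max t (T + 1)) with hg
  have hmem : ∀ t : ℝ, max t (T + 1) ∈ Set.Ioi T := fun t =>
    lt_of_lt_of_le (show T < T + 1 by linarith) (le_max_right _ _)
  have hga : Antitone g := fun s t hst =>
    hant (hmem s) (hmem t) (max_le_max hst le_rfl)
  have hbdd : BddBelow (Set.range g) := by
    refine ⟨0, ?_⟩
    rintro _ ⟨t, rfl⟩
    exact lyap_nonneg hxb (hpos _ (le_trans (by linarith) (le_max_right t (T + 1))))
  refine ⟨⨅ t, g t, (tendsto_atTop_ciInf hga hbdd).congr' ?_⟩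
  filter_upwards [eventually_ge_atTop (T + 1)] with t ht
  simp [hg, max_eq_left ht]

lemma lyap_exp {N : ℕ} (z : Fin N → ℝ) (j : Fin N) :
    lyap (fun i => if i = j then Real.exp 1 else 1) z
      = lyap (fun _ => 1) z - z j + (Real.exp 1 - 1) := by
  unfold lyap
  have h : ∀ i : Fin N,
      (z i * (Real.log (z i) - Real.log (if i = j then Real.exp 1 else 1) - 1)
        + (if i = j then Real.exp 1 else 1))
      = (z i * (Real.log (z i) - Real.log 1 - 1) + 1)
        + (if i = j then -z i + (Real.exp 1 - 1) else 0) := by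
    intro i
    by_cases h : i = j <;> simp [h, Real.log_exp] <;> ring
  simp_rw [h, Finset.sum_add_distrib, Finset.sum_ite_eq' Finset.univ j
    (fun i => -z i + (Real.exp 1 - 1))]
  simp
  ring

/-- If along a trajectory of a non-autonomous mass-action system with bounded kinetics
every Lyapunov function `V_{x̄}`, `x̄ ∈ ℝ^N_{>0}`, eventually strictly decreases, then the
ω-limit set of the trajectory is a single point. -/
theorem stmt_7 {N : ℕ} (hN : 0 < N)
    (C : Finset (Fin N → ℕ)) (R : Finset ((Fin N → ℕ) × (Fin N → ℕ)))
    (hnet : IsNetwork C R)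
    (κ : ((Fin N → ℕ) × (Fin N → ℕ)) → ℝ → ℝ) (η : ℝ) (hη : 0 < η)
    (hκ : ∀ r ∈ R, ∀ t : ℝ, 0 ≤ t → η < κ r t ∧ κ r t < 1 / η)
    (x : ℝ → Fin N → ℝ)
    (hpos : ∀ t : ℝ, 0 ≤ t → ∀ i, 0 < x t i)
    (hODE : ∀ t : ℝ, 0 ≤ t →
      HasDerivAt x (∑ r ∈ R, (κ r t * monom (x t) r.1) • (cv r.2 - cv r.1)) t)
    (hV : ∀ xb : Fin N → ℝ, (∀ i, 0 < xb i) →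
      ∃ T : ℝ, 0 < T ∧ ∀ t > T, deriv (fun s => lyap xb (x s)) t < 0) :
    ∃ z : Fin N → ℝ, omegaSet x = {z} := by
  have hlim : ∀ xb : Fin N → ℝ, (∀ i, 0 < xb i) → ∃ ℓ : ℝ,
      Tendsto (fun t => lyap xb (x t)) atTop (nhds ℓ) := by
    intro xb hxb
    obtain ⟨T, hT, hd⟩ := hV xb hxb
    exact lyap_limit hpos hxb hT (lyap_antitone hd)
  have hval : ∀ xb : Fin N → ℝ, (∀ i, 0 < xb i) → ∀ z ∈ omegaSet x, ∀ w ∈ omegaSet x,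
      lyap xb z = lyap xb w := by
    intro xb hxb z hz w hw
    obtain ⟨ℓ, hℓ⟩ := hlim xb hxb
    have key : ∀ v ∈ omegaSet x, lyap xb v = ℓ := by
      rintro v ⟨tn, htn, hconv⟩
      exact tendsto_nhds_unique
        (((lyap_continuous xb).continuousAt).tendsto.comp hconv) (hℓ.comp htn)
    rw [key z hz, key w hw]
  have huniq : ∀ z ∈ omegaSet x, ∀ w ∈ omegaSet x, z = w := by
    intro z hz w hw
    funext j
    have h1 := hval (fun _ => 1) (fun _ => one_pos) z hz w hw
    have h2 := hval (fun i => if i = j then Real.exp 1 else 1)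
      (fun i => by split
                   · exact Real.exp_pos 1
                   · exact one_pos) z hz w hw
    rw [lyap_exp, lyap_exp] at h2
    linarith
  obtain ⟨T, hT, hd⟩ := hV (fun _ => 1) (fun _ => one_pos)
  have hant := lyap_antitone hd
  set M := lyap (fun _ => 1) (x (T + 1)) with hM
  have hbound : ∀ t : ℝ, T + 1 ≤ t → ∀ i, x t i ≤ max (Real.exp 2) M := by
    intro t ht i
    have htpos : (0:ℝ) ≤ t := by linarith
    have hle : lyap (fun _ => 1) (x t) ≤ M := by
      rcases eq_or_lt_of_le ht with h | h
      · rw [← h]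
      · exact hant (by simp only [Set.mem_Ioi]; linarith)
          (by simp only [Set.mem_Ioi]; linarith) h.le
    have hterm : x t i * (Real.log (x t i) - Real.log 1 - 1) + 1
        ≤ lyap (fun _ => 1) (x t) :=
      Finset.single_le_sum (fun k _ => term_nonneg (hpos t htpos k) one_pos)
        (Finset.mem_univ i)
    have hu : 0 < x t i := hpos t htpos i
    have hle2 : x t i * (Real.log (x t i) - 1) + 1 ≤ M := by
      have := hterm.trans hle
      simpa [Real.log_one] using this
    by_cases hcase : x t i ≤ Real.exp 2
    · exact le_max_of_le_left hcase
    · push_neg at hcase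
      have hlog : 2 < Real.log (x t i) := by
        have := Real.log_lt_log (Real.exp_pos 2) hcase
        rwa [Real.log_exp] at this
      have hMlt : x t i < M := by nlinarith
      exact le_max_of_le_right hMlt.le
  set K := max (Real.exp 2) M with hK
  have hK0 : (0:ℝ) ≤ K := le_max_of_le_left (Real.exp_pos 2).le
  have hs : Bornology.IsBounded (Metric.closedBall (0 : Fin N → ℝ) K) :=
    Metric.isBounded_closedBall
  have hu : ∀ n : ℕ, x (T + 1 + n) ∈ Metric.closedBall (0 : Fin N → ℝ) K := by
    intro n
    have hn : (0:ℝ) ≤ n := Nat.cast_nonneg n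
    rw [Metric.mem_closedBall, dist_zero_right, pi_norm_le_iff_of_nonneg hK0]
    intro i
    have h1 : 0 < x (T + 1 + n) i := hpos _ (by linarith) i
    rw [Real.norm_eq_abs, abs_of_pos h1]
    exact hbound _ (by linarith) i
  obtain ⟨z, _, φ, hφ, hconv⟩ := tendsto_subseq_of_bounded hs hu
  have hz : z ∈ omegaSet x := by
    refine ⟨fun n => T + 1 + φ n, ?_, hconv⟩
    exact tendsto_atTop_add_const_left _ _
      (tendsto_natCast_atTop_atTop.comp hφ.tendsto_atTop)
  exact ⟨z, Set.eq_singleton_iff_unique_mem.2 ⟨hz, fun w hw => huniq w hw z hz⟩⟩
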